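/- Let ρ be a bipartite density matrix on C^2 ⊗ C^d that equals its own partial transpose on the first (qubit) factor: ρ = ρ^{Γ_1}. If additionally the off-diagonal qubit blocks of ρ satisfy the Hermiticity structure forced by this invariance, then ρ is separable. Specialized consequence used in the paper: the extended matrix ρ_EXT = Σ_i p_i Σ_{m+l=2i} |D_m^N⟩⟨D_l^N| satisfies ρ_EXT = ρ_EXT^{Γ_t} for every t, hence if ρ_EXT ≥ 0 it is separable. -/

import Mathlib

open scoped BigOperators ComplexOrder

noncomputable section

/-- Partial transpose on the first (qubit) factor of a state on `ℂ² ⊗ ℂ^d`. -/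
def ptransQubit (d : ℕ) (ρ : Matrix (Fin 2 × Fin d) (Fin 2 × Fin d) ℂ) :
    Matrix (Fin 2 × Fin d) (Fin 2 × Fin d) ℂ :=
  fun x y => ρ (y.1, x.2) (x.1, y.2)

/-- The rank-one product state `|u⟩⟨u| ⊗ |v⟩⟨v|` on `ℂ² ⊗ ℂ^d`. -/
def prodState2d (d : ℕ) (u : Fin 2 → ℂ) (v : Fin d → ℂ) :
    Matrix (Fin 2 × Fin d) (Fin 2 × Fin d) ℂ :=
  fun x y => (u x.1 * v x.2) * (starRingEnd ℂ) (u y.1 * v y.2)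

namespace Stmt8Aux

open Matrix

variable {d : ℕ}

lemma udu_apply (Q : Matrix (Fin d) (Fin d) ℂ) (c : Fin d → ℂ) (i j : Fin d) :
    (Q * Matrix.diagonal c * Qᴴ) i j = ∑ k, Q i k * c k * star (Q j k) := by
  rw [Matrix.mul_apply]
  simp [Matrix.mul_diagonal, Matrix.conjTranspose_apply, mul_comm]

lemma sandwich_mul (Us : Matrix (Fin d) (Fin d) ℂ) (hU : star Us * Us = 1)
    (c c' : Fin d → ℂ) :
    (Us * diagonal c * star Us) * (Us * diagonal c' * star Us)
      = Us * diagonal (fun i => c i * c' i) * star Us := by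
  have h1 : star Us * (Us * diagonal c' * star Us) = diagonal c' * star Us := by
    rw [← Matrix.mul_assoc, ← Matrix.mul_assoc, hU, Matrix.one_mul]
  calc (Us * diagonal c * star Us) * (Us * diagonal c' * star Us)
      = Us * diagonal c * (star Us * (Us * diagonal c' * star Us)) := by
        rw [Matrix.mul_assoc]
    _ = Us * diagonal c * (diagonal c' * star Us) := by rw [h1]
    _ = Us * (diagonal c * diagonal c') * star Us := by
        simp only [Matrix.mul_assoc]
    _ = Us * diagonal (fun i => c i * c' i) * star Us := by
        rw [diagonal_mul_diagonal]

lemma sandwich_herm (Us : Matrix (Fin d) (Fin d) ℂ) (c : Fin d → ℝ) :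
    (Us * diagonal (fun i => (c i : ℂ)) * star Us)ᴴ
      = Us * diagonal (fun i => (c i : ℂ)) * star Us := by
  have hd : (diagonal (fun i => (c i : ℂ)))ᴴ = diagonal (fun i => (c i : ℂ)) := by
    have hstar : star (fun i => (c i : ℂ)) = fun i => (c i : ℂ) := by
      funext i
      simp [Pi.star_apply, Complex.star_def, Complex.conj_ofReal]
    rw [diagonal_conjTranspose, hstar]
  rw [conjTranspose_mul, conjTranspose_mul, hd,
    show (star Us)ᴴ = Us from by rw [star_eq_conjTranspose, conjTranspose_conjTranspose],
    show Usᴴ = star Us from (star_eq_conjTranspose Us).symm, ← Matrix.mul_assoc]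

/-- The core construction: blocks `A B C` of a PSD matrix with `B` Hermitian
can be simultaneously decomposed. -/
lemma blocks (A B C : Matrix (Fin d) (Fin d) ℂ)
    (hA : A.IsHermitian) (hB : B.IsHermitian) (hC : C.IsHermitian)
    (key : ∀ x y : Fin d → ℂ,
      0 ≤ star x ⬝ᵥ (A *ᵥ x) + star x ⬝ᵥ (B *ᵥ y) + star y ⬝ᵥ (B *ᵥ x)
            + star y ⬝ᵥ (C *ᵥ y)) :
    ∃ (lam : Fin d → ℝ) (v s : Fin d → Fin d → ℂ),
      (∀ i j, C i j = ∑ k, v k i * star (v k j)) ∧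
      (∀ i j, B i j = ∑ k, (lam k : ℂ) * (v k i * star (v k j))) ∧
      (∀ i j, A i j = (∑ k, ((lam k : ℂ))^2 * (v k i * star (v k j)))
                        + ∑ k, s k i * star (s k j)) := by
  have hApos : A.PosSemidef := .of_dotProduct_mulVec_nonneg hA fun x => by simpa using key x 0
  have hCpos : C.PosSemidef := .of_dotProduct_mulVec_nonneg hC fun x => by simpa using key 0 x
  set μ : Fin d → ℝ := hC.eigenvalues with hμdef
  have hμ0 : ∀ i, 0 ≤ μ i := fun i => hCpos.eigenvalues_nonneg i
  set Us : Matrix (Fin d) (Fin d) ℂ := ↑(hC.eigenvectorUnitary) with hUsdef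
  have hU1 : star Us * Us = 1 :=
    (Matrix.mem_unitaryGroup_iff').mp hC.eigenvectorUnitary.2
  have hU2 : Us * star Us = 1 :=
    (Matrix.mem_unitaryGroup_iff).mp hC.eigenvectorUnitary.2
  have hCspec : C = Us * diagonal (fun i => (μ i : ℂ)) * star Us := hC.spectral_theorem
  set sq : Fin d → ℝ := fun i => Real.sqrt (μ i) with hsqdef
  set p : Fin d → ℝ := fun i => if μ i = 0 then 0 else (Real.sqrt (μ i))⁻¹ with hpdef
  set e : Fin d → ℝ := fun i => if μ i = 0 then 0 else 1 with hedef
  set Csq : Matrix (Fin d) (Fin d) ℂ := Us * diagonal (fun i => (sq i : ℂ)) * star Us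
    with hCsqdef
  set Dp : Matrix (Fin d) (Fin d) ℂ := Us * diagonal (fun i => (p i : ℂ)) * star Us
    with hDpdef
  set P : Matrix (Fin d) (Fin d) ℂ := Us * diagonal (fun i => (e i : ℂ)) * star Us
    with hPdef
  have hCsqH : Csqᴴ = Csq := sandwich_herm Us sq
  have hDpH : Dpᴴ = Dp := sandwich_herm Us p
  have hPH : Pᴴ = P := sandwich_herm Us e
  have hsqrtne : ∀ i, μ i ≠ 0 → Real.sqrt (μ i) ≠ 0 := by
    intro i h
    have : 0 < μ i := lt_of_le_of_ne (hμ0 i) (Ne.symm h)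
    positivity
  have hsqsq : Csq * Csq = C := by
    rw [hCsqdef, sandwich_mul Us hU1]
    have h1 : (fun i => (sq i : ℂ) * (sq i : ℂ)) = (fun i => ((μ i : ℝ) : ℂ)) := by
      funext i
      have h2 : sq i * sq i = μ i := Real.mul_self_sqrt (hμ0 i)
      rw [← Complex.ofReal_mul, h2]
    rw [h1, ← hCspec]
  have hsp : ∀ i, sq i * p i = e i := by
    intro i
    simp only [hsqdef, hpdef, hedef]
    by_cases h : μ i = 0
    · simp [h]
    · simp [h, mul_inv_cancel₀ (hsqrtne i h)]
  have hps : ∀ i, p i * sq i = e i := by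
    intro i
    rw [mul_comm]
    exact hsp i
  have hsqp : Csq * Dp = P := by
    rw [hCsqdef, hDpdef, sandwich_mul Us hU1, hPdef]
    have h1 : (fun i => (sq i : ℂ) * (p i : ℂ)) = (fun i => ((e i : ℝ) : ℂ)) := by
      funext i
      rw [← Complex.ofReal_mul, hsp i]
    rw [h1]
  have hpsq : Dp * Csq = P := by
    rw [hCsqdef, hDpdef, sandwich_mul Us hU1, hPdef]
    have h1 : (fun i => (p i : ℂ) * (sq i : ℂ)) = (fun i => ((e i : ℝ) : ℂ)) := by
      funext i
      rw [← Complex.ofReal_mul, hps i]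
    rw [h1]
  have hDpCDp : Dp * Dp * C * (Dp * Dp) = Dp * Dp := by
    conv_rhs => rw [hDpdef, sandwich_mul Us hU1]
    rw [hDpdef, hCspec, sandwich_mul Us hU1, sandwich_mul Us hU1, sandwich_mul Us hU1]
    have h1 : (fun i => (p i : ℂ) * (p i : ℂ) * (μ i : ℂ) * ((p i : ℂ) * (p i : ℂ)))
        = (fun i => (p i : ℂ) * (p i : ℂ)) := by
      funext i
      by_cases h : μ i = 0
      · simp only [hpdef]
        simp [h]
      · have hs0 : Real.sqrt (μ i) ≠ 0 := hsqrtne i h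
        have hss : Real.sqrt (μ i) * Real.sqrt (μ i) = μ i := Real.mul_self_sqrt (hμ0 i)
        have hppμ : p i * p i * μ i = 1 := by
          simp only [hpdef, if_neg h]
          field_simp
          linarith [hss]
        rw [show ((p i : ℂ) * (p i : ℂ) * (μ i : ℂ)) = ((p i * p i * μ i : ℝ) : ℂ) from by
          push_cast; ring, hppμ]
        simp
    rw [h1]
  have hker : ∀ y : Fin d → ℂ, C *ᵥ y = 0 → B *ᵥ y = 0 := by
    intro y hy
    have hc : ∀ x : Fin d → ℂ, star x ⬝ᵥ (B *ᵥ y) = 0 := by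
      intro x
      by_contra hne
      set c : ℂ := star x ⬝ᵥ (B *ᵥ y) with hcdef
      have hnc : 0 < Complex.normSq c := by
        simpa [Complex.normSq_pos] using hne
      have ha : 0 ≤ star x ⬝ᵥ (A *ᵥ x) := hApos.dotProduct_mulVec_nonneg x
      set a : ℝ := (star x ⬝ᵥ (A *ᵥ x)).re with hadef
      have haC : star x ⬝ᵥ (A *ᵥ x) = (a : ℂ) := by
        rw [hadef]; exact Complex.eq_re_of_ofReal_le ha
      have ha0 : 0 ≤ a := by
        have h' := ha; rw [haC] at h'; exact_mod_cast h'
      set ε : ℝ := (a + 1)⁻¹ with hεdef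
      have hε : 0 < ε := by positivity
      have hεa : ε * (a + 1) = 1 := by
        rw [hεdef]; exact inv_mul_cancel₀ (by positivity)
      have hconj : star y ⬝ᵥ (B *ᵥ x) = star c := by
        rw [hcdef, star_dotProduct]
        congr 1
        rw [star_mulVec, show Bᴴ = B from hB, ← dotProduct_mulVec]
      set t : ℂ := -(ε : ℂ) * c with htdef
      have hyC : star y ⬝ᵥ (C *ᵥ y) = 0 := by rw [hy]; simp
      have key' := key (t • x) y
      have e1 : star (t • x) ⬝ᵥ (A *ᵥ (t • x)) = (star t * t) * (a : ℂ) := by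
        rw [mulVec_smul, dotProduct_smul, star_smul, smul_dotProduct,
          smul_eq_mul, smul_eq_mul, haC]
        ring
      have e2 : star (t • x) ⬝ᵥ (B *ᵥ y) = star t * c := by
        rw [star_smul, smul_dotProduct, smul_eq_mul, ← hcdef]
      have e3 : star y ⬝ᵥ (B *ᵥ (t • x)) = t * star c := by
        rw [mulVec_smul, dotProduct_smul, smul_eq_mul, hconj]
      rw [e1, e2, e3, hyC, add_zero] at key'
      have hst : star t = -(ε : ℂ) * star c := by
        rw [htdef]; simp [Complex.conj_ofReal]
      have hcc : star c * c = (Complex.normSq c : ℂ) := by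
        rw [mul_comm]
        exact Complex.mul_conj c
      have hexp : (star t * t) * (a : ℂ) + star t * c + t * star c
          = ((ε^2 * Complex.normSq c * a - 2 * (ε * Complex.normSq c) : ℝ) : ℂ) := by
        calc (star t * t) * (a : ℂ) + star t * c + t * star c
            = (ε:ℂ)^2 * (star c * c) * (a:ℂ) - (ε:ℂ) * (star c * c)
              - (ε:ℂ) * (star c * c) := by rw [hst, htdef]; ring
          _ = _ := by rw [hcc]; push_cast; ring
      rw [hexp] at key'
      have hreal : (0:ℝ) ≤ ε^2 * Complex.normSq c * a - 2 * (ε * Complex.normSq c) := by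
        exact_mod_cast key'
      have hεa2 : ε * a = 1 - ε := by nlinarith [hεa]
      have h3 : ε^2 * Complex.normSq c * a = ε * Complex.normSq c * (1 - ε) := by
        have : ε^2 * Complex.normSq c * a = ε * Complex.normSq c * (ε * a) := by ring
        rw [this, hεa2]
      rw [h3] at hreal
      nlinarith [mul_pos hε hnc, mul_pos (mul_pos hε hnc) hε]
    funext i
    have h1 := hc (Pi.single i (1:ℂ))
    have hs : star (Pi.single i (1:ℂ) : Fin d → ℂ) = (Pi.single i (1:ℂ) : Fin d → ℂ) := by
      funext j
      by_cases h : j = i <;> simp [Pi.single_apply, h]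
    rw [hs, single_dotProduct, one_mul] at h1
    simpa using h1
  have hCU : C * Us = Us * diagonal (fun i => (μ i : ℂ)) := by
    rw [hCspec, Matrix.mul_assoc, Matrix.mul_assoc, hU1, Matrix.mul_one]
  have hBUcol : ∀ k, μ k = 0 → ∀ i, (B * Us) i k = 0 := by
    intro k hk i
    have hcol : C *ᵥ (fun j => Us j k) = 0 := by
      funext i'
      have h0 : (C * Us) i' k = 0 := by
        rw [hCU, Matrix.mul_diagonal, hk]; simp
      simpa [Matrix.mul_apply, Matrix.mulVec, dotProduct] using h0
    have h1 := hker _ hcol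
    have h2 : (B *ᵥ fun j => Us j k) i = 0 := by rw [h1]; rfl
    simpa [Matrix.mul_apply, Matrix.mulVec, dotProduct] using h2
  have hBP : B * P = B := by
    have hBUe : (B * Us) * diagonal (fun i => (e i : ℂ)) = B * Us := by
      ext i k
      rw [Matrix.mul_diagonal]
      by_cases h : μ k = 0
      · rw [hBUcol k h i]; simp
      · simp [hedef, h]
    calc B * P = ((B * Us) * diagonal (fun i => (e i : ℂ))) * star Us := by
          rw [hPdef, ← Matrix.mul_assoc, ← Matrix.mul_assoc]
      _ = B * Us * star Us := by rw [hBUe]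
      _ = B := by rw [Matrix.mul_assoc, hU2, Matrix.mul_one]
  have hPB : P * B = B := by
    have h1 := congrArg Matrix.conjTranspose hBP
    rwa [conjTranspose_mul, hPH, show Bᴴ = B from hB] at h1
  set X : Matrix (Fin d) (Fin d) ℂ := Dp * B * Dp with hXdef
  have hX : X.IsHermitian := by
    show Xᴴ = X
    rw [hXdef]
    simp only [conjTranspose_mul]
    rw [hDpH, show Bᴴ = B from hB]
    simp only [Matrix.mul_assoc]
  set lam : Fin d → ℝ := hX.eigenvalues with hlamdef
  set Vs : Matrix (Fin d) (Fin d) ℂ := ↑(hX.eigenvectorUnitary) with hVsdef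
  have hV1 : star Vs * Vs = 1 :=
    (Matrix.mem_unitaryGroup_iff').mp hX.eigenvectorUnitary.2
  have hV2 : Vs * star Vs = 1 :=
    (Matrix.mem_unitaryGroup_iff).mp hX.eigenvectorUnitary.2
  have hXspec : X = Vs * diagonal (fun i => (lam i : ℂ)) * star Vs := hX.spectral_theorem
  set Q : Matrix (Fin d) (Fin d) ℂ := Csq * Vs with hQdef
  have hQH : Qᴴ = star Vs * Csq := by
    rw [hQdef, conjTranspose_mul, hCsqH, show Vsᴴ = star Vs from rfl]
  have hCQ : Q * diagonal (fun _ => (1:ℂ)) * Qᴴ = C := by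
    rw [hQH, hQdef, diagonal_one, Matrix.mul_one, Matrix.mul_assoc, ← Matrix.mul_assoc Vs,
      hV2, Matrix.one_mul, hsqsq]
  have hBQ : Q * diagonal (fun k => (lam k : ℂ)) * Qᴴ = B := by
    rw [hQH, hQdef]
    have h1 : Csq * Vs * diagonal (fun k => (lam k : ℂ)) * (star Vs * Csq)
        = Csq * (Vs * diagonal (fun k => (lam k : ℂ)) * star Vs) * Csq := by
      simp only [Matrix.mul_assoc]
    rw [h1, ← hXspec, hXdef]
    calc Csq * (Dp * B * Dp) * Csq = (Csq * Dp) * B * (Dp * Csq) := by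
          simp only [Matrix.mul_assoc]
      _ = P * B * P := by rw [hsqp, hpsq]
      _ = B := by rw [hPB, hBP]
  have hXX : X * X = Vs * diagonal (fun k => ((lam k : ℂ))^2) * star Vs := by
    rw [hXspec, sandwich_mul Vs hV1]
    rw [show (fun i => (lam i : ℂ) * (lam i : ℂ)) = (fun k => ((lam k : ℂ))^2) from
      funext fun i => by ring]
  have hAQ : Q * diagonal (fun k => ((lam k : ℂ))^2) * Qᴴ = B * (Dp * Dp) * B := by
    rw [hQH, hQdef]
    have h1 : Csq * Vs * diagonal (fun k => ((lam k : ℂ))^2) * (star Vs * Csq)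
        = Csq * (Vs * diagonal (fun k => ((lam k : ℂ))^2) * star Vs) * Csq := by
      simp only [Matrix.mul_assoc]
    rw [h1, ← hXX, hXdef]
    calc Csq * (Dp * B * Dp * (Dp * B * Dp)) * Csq
        = (Csq * Dp) * B * (Dp * Dp) * B * (Dp * Csq) := by simp only [Matrix.mul_assoc]
      _ = P * B * (Dp * Dp) * B * P := by rw [hsqp, hpsq]
      _ = B * (Dp * Dp) * B := by
          rw [hPB]
          have h2 : B * (Dp * Dp) * B * P = B * (Dp * Dp) * (B * P) := by
            simp only [Matrix.mul_assoc]
          rw [h2, hBP, ← Matrix.mul_assoc]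
  set T : Matrix (Fin d) (Fin d) ℂ := B * (Dp * Dp) * B with hTdef
  have hTH : Tᴴ = T := by
    rw [hTdef]
    simp only [conjTranspose_mul]
    rw [hDpH, show Bᴴ = B from hB]
    simp only [Matrix.mul_assoc]
  have hS : (A - T).PosSemidef := by
    refine .of_dotProduct_mulVec_nonneg ?_ ?_
    · show (A - T)ᴴ = A - T
      rw [conjTranspose_sub, hTH, show A.conjTranspose = A from hA]
    · intro x
      set M : Matrix (Fin d) (Fin d) ℂ := Dp * Dp * B with hMdef
      have hMH : Mᴴ = B * (Dp * Dp) := by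
        rw [hMdef]
        simp only [conjTranspose_mul]
        rw [hDpH, show Bᴴ = B from hB]
      have key' := key x (-(M *ᵥ x))
      have hBM : B * M = T := by
        rw [hMdef, hTdef, ← Matrix.mul_assoc]
      have hMB : Mᴴ * B = T := by
        rw [hMH, hTdef]
      have hMCM : Mᴴ * (C * M) = T := by
        rw [hMH, hMdef, hTdef]
        calc B * (Dp * Dp) * (C * (Dp * Dp * B))
            = B * (Dp * Dp * C * (Dp * Dp)) * B := by simp only [Matrix.mul_assoc]
          _ = B * (Dp * Dp) * B := by rw [hDpCDp]
      have e2 : star x ⬝ᵥ (B *ᵥ (-(M *ᵥ x))) = -(star x ⬝ᵥ (T *ᵥ x)) := by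
        rw [mulVec_neg, dotProduct_neg, mulVec_mulVec, hBM]
      have e3 : star (-(M *ᵥ x)) ⬝ᵥ (B *ᵥ x) = -(star x ⬝ᵥ (T *ᵥ x)) := by
        rw [star_neg, neg_dotProduct, star_mulVec, dotProduct_mulVec, vecMul_vecMul,
          hMB, ← dotProduct_mulVec]
      have e4 : star (-(M *ᵥ x)) ⬝ᵥ (C *ᵥ (-(M *ᵥ x))) = star x ⬝ᵥ (T *ᵥ x) := by
        rw [star_neg, neg_dotProduct, mulVec_neg, dotProduct_neg, neg_neg, star_mulVec,
          mulVec_mulVec, dotProduct_mulVec, vecMul_vecMul, hMCM, ← dotProduct_mulVec]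
      rw [e2, e3, e4] at key'
      have hfin : star x ⬝ᵥ (A *ᵥ x) + -(star x ⬝ᵥ (T *ᵥ x)) + -(star x ⬝ᵥ (T *ᵥ x))
          + star x ⬝ᵥ (T *ᵥ x) = star x ⬝ᵥ ((A - T) *ᵥ x) := by
        rw [sub_mulVec, dotProduct_sub]; ring
      rwa [hfin] at key'
  open scoped MatrixOrder in
  obtain ⟨L, hL⟩ : ∃ L : Matrix (Fin d) (Fin d) ℂ, A - T = Lᴴ * L :=
    CStarAlgebra.nonneg_iff_eq_star_mul_self.mp hS.nonneg
  refine ⟨lam, fun k i => Q i k, fun k i => star (L k i), ?_, ?_, ?_⟩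
  · intro i j
    rw [← hCQ, udu_apply]
    exact Finset.sum_congr rfl fun k _ => by ring
  · intro i j
    rw [← hBQ, udu_apply]
    exact Finset.sum_congr rfl fun k _ => by ring
  · intro i j
    have hAij : A i j = T i j + (Lᴴ * L) i j := by
      rw [← hL, Matrix.sub_apply]
      ring
    rw [hAij, ← hAQ, udu_apply]
    congr 1
    · exact Finset.sum_congr rfl fun k _ => by ring
    · rw [Matrix.mul_apply]
      refine Finset.sum_congr rfl fun k _ => ?_
      simp [Matrix.conjTranspose_apply, star_star]

end Stmt8Aux

section Stmt8Main

open Matrix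

/-- Kraus–Cirac–Karnas–Lewenstein: A positive semidefinite state on `ℂ² ⊗ ℂ^d`
which is invariant under partial transposition of the qubit factor, `ρ = ρ^{Γ₁}`, is
separable, i.e. a convex combination of product states. -/
theorem stmt8 (d : ℕ) (ρ : Matrix (Fin 2 × Fin d) (Fin 2 × Fin d) ℂ)
    (hpos : ρ.PosSemidef) (hinv : ρ = ptransQubit d ρ) :
    ∃ (r : ℕ) (w : Fin r → ℝ) (u : Fin r → Fin 2 → ℂ) (v : Fin r → Fin d → ℂ),
      (∀ s, 0 ≤ w s) ∧ ρ = ∑ s, (w s : ℂ) • prodState2d d (u s) (v s) := by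
  classical
  have hswap : ∀ (a b : Fin 2) (i j : Fin d), ρ (a, i) (b, j) = ρ (b, i) (a, j) := by
    intro a b i j
    exact congrFun (congrFun hinv (a, i)) (b, j)
  set A : Matrix (Fin d) (Fin d) ℂ := Matrix.of fun i j => ρ (0, i) (0, j) with hAdef
  set B : Matrix (Fin d) (Fin d) ℂ := Matrix.of fun i j => ρ (0, i) (1, j) with hBdef
  set C : Matrix (Fin d) (Fin d) ℂ := Matrix.of fun i j => ρ (1, i) (1, j) with hCdef
  have hA : A.IsHermitian := by
    show A.conjTranspose = A
    ext i j
    simp only [Matrix.conjTranspose_apply, hAdef, Matrix.of_apply]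
    exact hpos.1.apply (0, i) (0, j)
  have hC : C.IsHermitian := by
    show C.conjTranspose = C
    ext i j
    simp only [Matrix.conjTranspose_apply, hCdef, Matrix.of_apply]
    exact hpos.1.apply (1, i) (1, j)
  have hB : B.IsHermitian := by
    show B.conjTranspose = B
    ext i j
    simp only [Matrix.conjTranspose_apply, hBdef, Matrix.of_apply]
    exact (hpos.1.apply (1, i) (0, j)).trans (hswap 1 0 i j)
  have key : ∀ x y : Fin d → ℂ,
      0 ≤ star x ⬝ᵥ (A *ᵥ x) + star x ⬝ᵥ (B *ᵥ y) + star y ⬝ᵥ (B *ᵥ x)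
            + star y ⬝ᵥ (C *ᵥ y) := by
    intro x y
    have h := hpos.dotProduct_mulVec_nonneg (fun q => if q.1 = 0 then x q.2 else y q.2)
    have hexp : (star (fun q : Fin 2 × Fin d => if q.1 = 0 then x q.2 else y q.2)) ⬝ᵥ
        (ρ *ᵥ (fun q => if q.1 = 0 then x q.2 else y q.2))
        = star x ⬝ᵥ (A *ᵥ x) + star x ⬝ᵥ (B *ᵥ y) + star y ⬝ᵥ (B *ᵥ x)
            + star y ⬝ᵥ (C *ᵥ y) := by
      simp only [dotProduct, Matrix.mulVec, Pi.star_apply,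
        Fintype.sum_prod_type, Fin.sum_univ_two, hAdef, hBdef, hCdef, Matrix.of_apply]
      simp only [show ((0:Fin 2) = 0) = True from by simp,
        show ((1:Fin 2) = 0) = False from by simp [Fin.ext_iff], if_true, if_false]
      simp only [hswap 1 0]
      simp only [mul_add, Finset.sum_add_distrib]
      ring
    rw [hexp] at h
    exact h
  obtain ⟨lam, v, s, hCid, hBid, hAid⟩ := Stmt8Aux.blocks A B C hA hB hC key
  set U : Fin (d + d) → Fin 2 → ℂ := fun k => Fin.addCases (motive := fun _ => Fin 2 → ℂ)
    (fun k0 => ![(lam k0 : ℂ), 1]) (fun _ => ![1, 0]) k with hUdef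
  set V : Fin (d + d) → Fin d → ℂ := fun k => Fin.addCases (motive := fun _ => Fin d → ℂ)
    v s k with hVdef
  refine ⟨d + d, fun _ => 1, U, V, fun _ => zero_le_one, ?_⟩
  funext q q'
  obtain ⟨a, i⟩ := q
  obtain ⟨b, j⟩ := q'
  have happ : (∑ k : Fin (d + d), ((1:ℝ) : ℂ) • prodState2d d (U k) (V k)) (a, i) (b, j)
      = (∑ k0 : Fin d, (![(lam k0 : ℂ), 1] a * v k0 i)
            * star (![(lam k0 : ℂ), 1] b * v k0 j))
        + ∑ k1 : Fin d, (![(1:ℂ), 0] a * s k1 i) * star (![(1:ℂ), 0] b * s k1 j) := by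
    simp only [Matrix.sum_apply, Complex.ofReal_one, one_smul, Matrix.smul_apply]
    rw [Fin.sum_univ_add]
    congr 1
    · refine Finset.sum_congr rfl fun k0 _ => ?_
      rw [hUdef, hVdef]
      simp only [Fin.addCases_left]
      rfl
    · refine Finset.sum_congr rfl fun k1 _ => ?_
      rw [hUdef, hVdef]
      simp only [Fin.addCases_right]
      rfl
  rw [happ]
  fin_cases a <;> fin_cases b <;>
    simp only [Fin.mk_zero, Fin.mk_one, Matrix.cons_val_zero, Matrix.cons_val_one,
      Matrix.head_cons, one_mul, zero_mul, mul_zero, star_zero, star_one,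
      Finset.sum_const_zero, add_zero]
  · -- (0,0) block : A
    rw [show ρ (0, i) (0, j) = A i j from rfl, hAid i j]
    congr 1
    refine Finset.sum_congr rfl fun k _ => ?_
    simp only [star_mul', Complex.star_def, Complex.conj_ofReal]
    ring
  · -- (0,1) block : B
    rw [show ρ (0, i) (1, j) = B i j from rfl, hBid i j]
    refine Finset.sum_congr rfl fun k _ => ?_
    ring
  · -- (1,0) block : B
    rw [hswap 1 0 i j, show ρ (0, i) (1, j) = B i j from rfl, hBid i j]
    refine Finset.sum_congr rfl fun k _ => ?_
    simp only [star_mul', Complex.star_def, Complex.conj_ofReal]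
    ring
  · -- (1,1) block : C
    rw [show ρ (1, i) (1, j) = C i j from rfl, hCid i j]

end Stmt8Main
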